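/- (Discrete total-energy conservation of the second-order IMEX gray-model scheme under periodic boundary conditions.) Let N ≥ 1 and let ε, Δt, Δx, c, σ, C_v, a > 0 be real constants. For m ∈ {n, n+1} let I0^m, Î1^m, T^m : ℤ/Nℤ → ℝ, and define Φ_i^m = (Î1^m_{i+1} − Î1^m_{i−1})/(2Δx) − (1/(2Δx))·(I0^m_{i+1} − 2 I0^m_i + I0^m_{i−1}). Suppose that for all i ∈ ℤ/Nℤ: (ε²/c)·(I0ⁿ⁺¹_i − I0ⁿ_i)/Δt + (ε²/2)·(Φ_iⁿ⁺¹ + Φ_iⁿ) = (σ/2)·[(a c (Tⁿ⁺¹_i)⁴ − I0ⁿ⁺¹_i) + (a c (Tⁿ_i)⁴ − I0ⁿ_i)], and ε² C_v (Tⁿ⁺¹_i − Tⁿ_i)/Δt = (σ/2)·[(I0ⁿ⁺¹_i − a c (Tⁿ⁺¹_i)⁴) + (I0ⁿ_i − a c (Tⁿ_i)⁴)]. Then Σ_{i ∈ ℤ/Nℤ} ((1/c) I0ⁿ⁺¹_i + C_v Tⁿ⁺¹_i) = Σ_{i ∈ ℤ/Nℤ} ((1/c) I0ⁿ_i + C_v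 Tⁿ_i). -/

import Mathlib

lemma sum_shift {N : ℕ} [NeZero N] (A : ZMod N → ℝ) (k : ZMod N) :
    ∑ i : ZMod N, A (i + k) = ∑ i : ZMod N, A i :=
  Fintype.sum_equiv (Equiv.addRight k) _ _ (fun _ => rfl)

lemma sum_phi_zero {N : ℕ} [NeZero N] (Δx : ℝ) (A B Φ : ZMod N → ℝ)
    (hΦ : ∀ i : ZMod N,
      Φ i = (A (i + 1) - A (i - 1)) / (2 * Δx)
        - (1 / (2 * Δx)) * (B (i + 1) - 2 * B i + B (i - 1))) :
    ∑ i : ZMod N, Φ i = 0 := by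
  have h1 := sum_shift A 1
  have h2 := sum_shift (fun i => A (i - 1)) 1
  have h3 := sum_shift B 1
  have h4 := sum_shift (fun i => B (i - 1)) 1
  simp only [add_sub_cancel_right] at h2 h4
  calc ∑ i : ZMod N, Φ i
      = ∑ i : ZMod N, ((A (i + 1) - A (i - 1)) / (2 * Δx)
        - (1 / (2 * Δx)) * (B (i + 1) - 2 * B i + B (i - 1))) := by
        exact Finset.sum_congr rfl (fun i _ => hΦ i)
    _ = ((∑ i : ZMod N, A (i + 1)) - ∑ i : ZMod N, A (i - 1)) / (2 * Δx)
        - (1 / (2 * Δx)) * ((∑ i : ZMod N, B (i + 1)) - 2 * ∑ i : ZMod N, B i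
          + ∑ i : ZMod N, B (i - 1)) := by
        simp [Finset.sum_sub_distrib, Finset.sum_add_distrib, Finset.mul_sum,
          Finset.sum_div, sub_div, mul_add, mul_sub]
    _ = 0 := by rw [h1, h2, h3, h4]; ring

/-- Discrete total-energy conservation of the second-order (Crank–Nicolson)
IMEX gray-model scheme under periodic boundary conditions. -/
theorem discrete_energy_conservation_gray_second_order_periodic
    (N : ℕ) [NeZero N] (hN : 1 ≤ N)
    (ε Δt Δx c σ Cv a : ℝ)
    (hε : 0 < ε) (hΔt : 0 < Δt) (hΔx : 0 < Δx) (hc : 0 < c)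
    (hσ : 0 < σ) (hCv : 0 < Cv) (ha : 0 < a)
    (I0n I0n1 I1n I1n1 Tn Tn1 : ZMod N → ℝ)
    (Φn Φn1 : ZMod N → ℝ)
    (hΦn : ∀ i : ZMod N,
      Φn i = (I1n (i + 1) - I1n (i - 1)) / (2 * Δx)
        - (1 / (2 * Δx)) * (I0n (i + 1) - 2 * I0n i + I0n (i - 1)))
    (hΦn1 : ∀ i : ZMod N,
      Φn1 i = (I1n1 (i + 1) - I1n1 (i - 1)) / (2 * Δx)
        - (1 / (2 * Δx)) * (I0n1 (i + 1) - 2 * I0n1 i + I0n1 (i - 1)))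
    (hI0 : ∀ i : ZMod N,
      (ε ^ 2 / c) * (I0n1 i - I0n i) / Δt + (ε ^ 2 / 2) * (Φn1 i + Φn i)
      = (σ / 2) * ((a * c * (Tn1 i) ^ 4 - I0n1 i)
          + (a * c * (Tn i) ^ 4 - I0n i)))
    (hT : ∀ i : ZMod N,
      ε ^ 2 * Cv * (Tn1 i - Tn i) / Δt
      = (σ / 2) * ((I0n1 i - a * c * (Tn1 i) ^ 4)
          + (I0n i - a * c * (Tn i) ^ 4))) :
    ∑ i : ZMod N, ((1 / c) * I0n1 i + Cv * Tn1 i)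
      = ∑ i : ZMod N, ((1 / c) * I0n i + Cv * Tn i) := by
  have hε2 : (ε : ℝ) ^ 2 ≠ 0 := pow_ne_zero 2 hε.ne'
  have key : ∀ i : ZMod N,
      ((1 / c) * I0n1 i + Cv * Tn1 i) - ((1 / c) * I0n i + Cv * Tn i)
        = -(Δt / 2) * (Φn1 i + Φn i) := by
    intro i
    have h := congrArg₂ (· + ·) (hI0 i) (hT i)
    have h' : (ε ^ 2 / c) * (I0n1 i - I0n i) / Δt + ε ^ 2 * Cv * (Tn1 i - Tn i) / Δt
        = -(ε ^ 2 / 2) * (Φn1 i + Φn i) := by linarith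
    field_simp at h' ⊢
    apply mul_left_cancel₀ (mul_ne_zero hε2 hΔt.ne')
    linear_combination (ε ^ 2 * Δt) * h'
  have hsum : ∑ i : ZMod N, (((1 / c) * I0n1 i + Cv * Tn1 i)
      - ((1 / c) * I0n i + Cv * Tn i)) = 0 := by
    rw [Finset.sum_congr rfl (fun i _ => key i), ← Finset.mul_sum,
      Finset.sum_add_distrib, sum_phi_zero Δx I1n1 I0n1 Φn1 hΦn1,
      sum_phi_zero Δx I1n I0n Φn hΦn]
    ring
  rw [Finset.sum_sub_distrib] at hsum
  linarith
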